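/- Let l be an even positive integer and let p, q be odd integers with p, q ≥ 3 and p + q = l. Then the adjacency spectral radius of K_p + K_q is at most that of K_3 + K_{l-3}, with equality if and only if p = 3 or q = 3. -/

import Mathlib

open SimpleGraph

open scoped Classical in
/-- The adjacency spectral radius of a finite simple graph: the largest real
eigenvalue of its adjacency matrix. -/
noncomputable def specRad {V : Type*} [Fintype V] (G : SimpleGraph V) : ℝ :=
  sSup {μ : ℝ | ∃ v : V → ℝ, v ≠ 0 ∧
    Matrix.mulVec (Matrix.of fun i j => if G.Adj i j then (1:ℝ) else 0) v = μ • v}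

/-- `K_p + K_q`: the disjoint union of `K_p` and `K_q` together with one extra
edge joining a vertex of `K_p` to a vertex of `K_q`. -/
def KplusK (p q : ℕ) (hp : 0 < p) (hq : 0 < q) : SimpleGraph (Fin p ⊕ Fin q) :=
  ((⊤ : SimpleGraph (Fin p)) ⊕g (⊤ : SimpleGraph (Fin q))) ⊔
    SimpleGraph.fromEdgeSet {s(Sum.inl ⟨0, hp⟩, Sum.inr ⟨0, hq⟩)}

section SpecToolSection

set_option linter.unusedSectionVars false

open scoped RealInnerProductSpace
open Matrix

variable {n : Type*} [Fintype n] [DecidableEq n] [Nonempty n] {A : Matrix n n ℝ}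

namespace SpecTool

noncomputable def toE : (n → ℝ) ≃ₗ[ℝ] EuclideanSpace ℝ n := (WithLp.linearEquiv 2 ℝ (n → ℝ)).symm

lemma inner_toE (v w : n → ℝ) : ⟪toE v, toE w⟫ = v ⬝ᵥ w := by
  simp [toE, PiLp.inner_apply, dotProduct]
  exact Finset.sum_congr rfl fun i _ => mul_comm _ _

lemma toE_mulVec (v : n → ℝ) : toE (A *ᵥ v) = Matrix.toEuclideanLin A (toE v) := rfl

lemma coe_basis (hA : A.IsHermitian) (i : n) :
    toE ⇑(hA.eigenvectorBasis i) = hA.eigenvectorBasis i := rfl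

lemma T_basis (hA : A.IsHermitian) (i : n) :
    Matrix.toEuclideanLin A (hA.eigenvectorBasis i)
      = hA.eigenvalues i • hA.eigenvectorBasis i := by
  rw [← coe_basis hA i, ← toE_mulVec, hA.mulVec_eigenvectorBasis i, _root_.map_smul, coe_basis]

lemma expand (hA : A.IsHermitian) (y : EuclideanSpace ℝ n) :
    ⟪y, Matrix.toEuclideanLin A y⟫ =
      ∑ i, hA.eigenvalues i * ⟪hA.eigenvectorBasis i, y⟫ ^ 2 := by
  rw [← (hA.eigenvectorBasis).sum_inner_mul_inner y (Matrix.toEuclideanLin A y)]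
  refine Finset.sum_congr rfl fun i _ => ?_
  have hS := Matrix.isHermitian_iff_isSymmetric.1 hA
  have h2 : ⟪hA.eigenvectorBasis i, Matrix.toEuclideanLin A y⟫
      = ⟪Matrix.toEuclideanLin A (hA.eigenvectorBasis i), y⟫ := (hS _ y).symm
  rw [h2, T_basis hA, real_inner_smul_left, real_inner_comm y]
  ring

lemma parseval (hA : A.IsHermitian) (y : EuclideanSpace ℝ n) :
    ⟪y, y⟫ = ∑ i, ⟪hA.eigenvectorBasis i, y⟫ ^ 2 := by
  rw [← (hA.eigenvectorBasis).sum_inner_mul_inner y y]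
  refine Finset.sum_congr rfl fun i _ => ?_
  rw [real_inner_comm y]; ring

lemma rayleigh_le (hA : A.IsHermitian) {lam : ℝ} (hmax : ∀ i, hA.eigenvalues i ≤ lam)
    (v : n → ℝ) : v ⬝ᵥ (A *ᵥ v) ≤ lam * (v ⬝ᵥ v) := by
  have h1 : v ⬝ᵥ (A *ᵥ v) = ⟪toE v, Matrix.toEuclideanLin A (toE v)⟫ := by
    rw [← toE_mulVec, inner_toE]
  have h2 : v ⬝ᵥ v = ⟪toE v, toE v⟫ := (inner_toE v v).symm
  rw [h1, h2, expand hA, parseval hA]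
  rw [Finset.mul_sum]
  exact Finset.sum_le_sum fun i _ =>
    mul_le_mul_of_nonneg_right (hmax i) (sq_nonneg _)

lemma eigen_of_eq (hA : A.IsHermitian) {lam : ℝ} (hmax : ∀ i, hA.eigenvalues i ≤ lam)
    (v : n → ℝ) (heq : v ⬝ᵥ (A *ᵥ v) = lam * (v ⬝ᵥ v)) : A *ᵥ v = lam • v := by
  set y := toE v with hy
  have h1 : ⟪y, Matrix.toEuclideanLin A y⟫ = lam * ⟪y, y⟫ := by
    rw [← toE_mulVec, inner_toE, inner_toE]; exact heq
  have h0 : ∀ i ∈ Finset.univ, (0:ℝ) ≤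
      (lam - hA.eigenvalues i) * ⟪hA.eigenvectorBasis i, y⟫ ^ 2 := fun i _ =>
    mul_nonneg (by linarith [hmax i]) (sq_nonneg _)
  have hsum : ∑ i, (lam - hA.eigenvalues i) * ⟪hA.eigenvectorBasis i, y⟫ ^ 2 = 0 := by
    have := expand hA y
    have hp := parseval hA y
    simp only [sub_mul, Finset.sum_sub_distrib]
    rw [← Finset.mul_sum, ← hp, ← this, h1, sub_self]
  have hz := (Finset.sum_eq_zero_iff_of_nonneg h0).1 hsum
  have key : ∀ i, hA.eigenvalues i * ⟪hA.eigenvectorBasis i, y⟫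
      = lam * ⟪hA.eigenvectorBasis i, y⟫ := by
    intro i
    have := hz i (Finset.mem_univ i)
    rcases mul_eq_zero.1 this with h | h
    · rw [show hA.eigenvalues i = lam by linarith]
    · rw [pow_eq_zero_iff (two_ne_zero)] at h
      rw [h, mul_zero, mul_zero]
  have hTy : Matrix.toEuclideanLin A y = lam • y := by
    have hrepr : ∀ i, (hA.eigenvectorBasis).repr (Matrix.toEuclideanLin A y) i
        = (hA.eigenvectorBasis).repr (lam • y) i := by
      intro i
      rw [OrthonormalBasis.repr_apply_apply, OrthonormalBasis.repr_apply_apply]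
      have hS := Matrix.isHermitian_iff_isSymmetric.1 hA
      have : ⟪hA.eigenvectorBasis i, Matrix.toEuclideanLin A y⟫
          = ⟪Matrix.toEuclideanLin A (hA.eigenvectorBasis i), y⟫ := (hS _ y).symm
      rw [this, T_basis hA, real_inner_smul_left, key i, real_inner_smul_right]
    have : (hA.eigenvectorBasis).repr (Matrix.toEuclideanLin A y)
        = (hA.eigenvectorBasis).repr (lam • y) := by
      ext i; exact hrepr i
    exact (hA.eigenvectorBasis).repr.injective this
  calc A *ᵥ v = toE.symm (Matrix.toEuclideanLin A y) := rfl
    _ = toE.symm (lam • y) := by rw [hTy]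
    _ = lam • v := by rw [_root_.map_smul, hy, LinearEquiv.symm_apply_apply]

lemma dot_pos {v : n → ℝ} (hv : v ≠ 0) : 0 < v ⬝ᵥ v := by
  have h1 : 0 ≤ v ⬝ᵥ v := Finset.sum_nonneg fun i _ => mul_self_nonneg _
  rcases h1.eq_or_lt with h | h
  · exact absurd ((dotProduct_self_eq_zero).1 h.symm) hv
  · exact h

lemma spec_package (hA : A.IsHermitian) (hnn : ∀ i j, 0 ≤ A i j) :
    ∃ lam x, IsGreatest {μ : ℝ | ∃ v : n → ℝ, v ≠ 0 ∧ A *ᵥ v = μ • v} lam ∧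
      (∀ i, 0 ≤ x i) ∧ x ≠ 0 ∧ A *ᵥ x = lam • x ∧
      ∀ v : n → ℝ, v ⬝ᵥ (A *ᵥ v) ≤ lam * (v ⬝ᵥ v) := by
  obtain ⟨i0, hmax⟩ := Finite.exists_max hA.eigenvalues
  set lam := hA.eigenvalues i0 with hlam
  set v0 : n → ℝ := ⇑(hA.eigenvectorBasis i0) with hv0
  have hev : A *ᵥ v0 = lam • v0 := hA.mulVec_eigenvectorBasis i0
  have hv0ne : v0 ≠ 0 := by
    intro h
    apply hA.eigenvectorBasis.orthonormal.ne_zero i0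
    have : toE v0 = hA.eigenvectorBasis i0 := rfl
    rw [← this, h, map_zero]
  set x : n → ℝ := fun i => |v0 i| with hx
  have hxne : x ≠ 0 := by
    intro h
    apply hv0ne
    funext i
    have := congrFun h i
    simpa [hx] using abs_eq_zero.1 this
  have hray := rayleigh_le hA hmax
  have hxx : x ⬝ᵥ x = v0 ⬝ᵥ v0 := by
    simp only [dotProduct, hx, abs_mul_abs_self]
  have hlow : lam * (x ⬝ᵥ x) ≤ x ⬝ᵥ (A *ᵥ x) := by
    have h1 : v0 ⬝ᵥ (A *ᵥ v0) = lam * (v0 ⬝ᵥ v0) := by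
      rw [hev, dotProduct_smul, smul_eq_mul]
    rw [hxx, ← h1]
    simp only [dotProduct, mulVec]
    refine Finset.sum_le_sum fun i _ => ?_
    rw [Finset.mul_sum, Finset.mul_sum]
    refine Finset.sum_le_sum fun j _ => ?_
    have habs : |v0 i * (A i j * v0 j)| = x i * (A i j * x j) := by
      rw [abs_mul, abs_mul, abs_of_nonneg (hnn i j)]
    exact (le_abs_self _).trans_eq habs
  have heq : x ⬝ᵥ (A *ᵥ x) = lam * (x ⬝ᵥ x) := le_antisymm (hray x) hlow
  have heig : A *ᵥ x = lam • x := eigen_of_eq hA hmax x heq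
  refine ⟨lam, x, ⟨⟨x, hxne, heig⟩, ?_⟩, fun i => abs_nonneg _, hxne, heig, hray⟩
  rintro μ ⟨v, hvne, hveq⟩
  have h1 : v ⬝ᵥ (A *ᵥ v) = μ * (v ⬝ᵥ v) := by rw [hveq, dotProduct_smul, smul_eq_mul]
  have h2 := hray v
  rw [h1] at h2
  exact le_of_mul_le_mul_right (by linarith) (dot_pos hvne)

end SpecTool

end SpecToolSection

section GraphPart
open Matrix

open scoped Classical in
noncomputable def AM {V : Type*} [Fintype V] (G : SimpleGraph V) : Matrix V V ℝ :=
  Matrix.of fun i j => if G.Adj i j then (1:ℝ) else 0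

lemma specRad_def' {V : Type*} [Fintype V] (G : SimpleGraph V) :
    specRad G = sSup {μ : ℝ | ∃ v : V → ℝ, v ≠ 0 ∧ AM G *ᵥ v = μ • v} := rfl

lemma AM_nonneg {V : Type*} [Fintype V] (G : SimpleGraph V) (i j : V) : 0 ≤ AM G i j := by
  unfold AM; dsimp; split <;> norm_num

lemma AM_herm {V : Type*} [Fintype V] (G : SimpleGraph V) : (AM G).IsHermitian := by
  ext i j
  simp only [Matrix.conjTranspose_apply, AM, Matrix.of_apply, star_trivial]
  rw [SimpleGraph.adj_comm]

lemma specRad_package {V : Type*} [Fintype V] [DecidableEq V] [Nonempty V]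
    (G : SimpleGraph V) :
    ∃ x : V → ℝ, (∀ i, 0 ≤ x i) ∧ x ≠ 0 ∧ AM G *ᵥ x = specRad G • x ∧
      ∀ v : V → ℝ, v ⬝ᵥ (AM G *ᵥ v) ≤ specRad G * (v ⬝ᵥ v) := by
  obtain ⟨lam, x, hgreat, hnn, hne, heig, hray⟩ :=
    SpecTool.spec_package (AM_herm G) (AM_nonneg G)
  have hspec : specRad G = lam := by rw [specRad_def']; exact hgreat.csSup_eq
  exact ⟨x, hnn, hne, by rw [hspec]; exact heig, by rw [hspec]; exact hray⟩

lemma S_map {V W : Type*} [Fintype V] [Fintype W] (e : V ≃ W)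
    (G : SimpleGraph V) (H : SimpleGraph W)
    (hadj : ∀ i j, G.Adj i j ↔ H.Adj (e i) (e j)) (μ : ℝ)
    (h : ∃ v : V → ℝ, v ≠ 0 ∧ AM G *ᵥ v = μ • v) :
    ∃ w : W → ℝ, w ≠ 0 ∧ AM H *ᵥ w = μ • w := by
  obtain ⟨v, hv, hveq⟩ := h
  refine ⟨v ∘ e.symm, ?_, ?_⟩
  · intro h0
    apply hv
    funext i
    have := congrFun h0 (e i)
    simpa using this
  · funext i
    have key : (AM H *ᵥ (v ∘ e.symm)) i = (AM G *ᵥ v) (e.symm i) := by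
      simp only [Matrix.mulVec, dotProduct, Function.comp_apply]
      exact Fintype.sum_equiv e.symm (fun j => AM H i j * v (e.symm j))
        (fun j => AM G (e.symm i) j * v j) (fun j => by
          have h1 : H.Adj i j ↔ G.Adj (e.symm i) (e.symm j) := by
            rw [hadj (e.symm i) (e.symm j), e.apply_symm_apply, e.apply_symm_apply]
          simp only [AM, Matrix.of_apply]
          by_cases h : H.Adj i j
          · rw [if_pos h, if_pos (h1.mp h)]
          · rw [if_neg h, if_neg (fun hc => h (h1.mpr hc))])
    rw [key, hveq]
    simp

lemma specRad_iso {V W : Type*} [Fintype V] [Fintype W] (e : V ≃ W)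
    (G : SimpleGraph V) (H : SimpleGraph W)
    (hadj : ∀ i j, G.Adj i j ↔ H.Adj (e i) (e j)) : specRad G = specRad H := by
  rw [specRad_def', specRad_def']
  congr 1
  ext μ
  constructor
  · exact S_map e G H hadj μ
  · refine S_map e.symm H G (fun i j => ?_) μ
    rw [hadj (e.symm i) (e.symm j), e.apply_symm_apply, e.apply_symm_apply]

variable {p q : ℕ} {hp : 0 < p} {hq : 0 < q}

lemma adj_ll (a b : Fin p) : (KplusK p q hp hq).Adj (Sum.inl a) (Sum.inl b) ↔ a ≠ b := by
  simp [KplusK, SimpleGraph.sup_adj, SimpleGraph.fromEdgeSet_adj, Sym2.eq_iff]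

lemma adj_rr (a b : Fin q) : (KplusK p q hp hq).Adj (Sum.inr a) (Sum.inr b) ↔ a ≠ b := by
  simp [KplusK, SimpleGraph.sup_adj, SimpleGraph.fromEdgeSet_adj, Sym2.eq_iff]

lemma adj_lr (a : Fin p) (b : Fin q) :
    (KplusK p q hp hq).Adj (Sum.inl a) (Sum.inr b) ↔ a = ⟨0, hp⟩ ∧ b = ⟨0, hq⟩ := by
  simp [KplusK, SimpleGraph.sup_adj, SimpleGraph.fromEdgeSet_adj, Sym2.eq_iff]

lemma adj_rl (a : Fin q) (b : Fin p) :
    (KplusK p q hp hq).Adj (Sum.inr a) (Sum.inl b) ↔ b = ⟨0, hp⟩ ∧ a = ⟨0, hq⟩ := by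
  simp [KplusK, SimpleGraph.sup_adj, SimpleGraph.fromEdgeSet_adj, Sym2.eq_iff]
  tauto

lemma sum_ind_ne (k : ℕ) (a : Fin k) : ∑ b : Fin k, (if a ≠ b then (1:ℝ) else 0) = k - 1 := by
  have : ∀ b : Fin k, (if a ≠ b then (1:ℝ) else 0) = 1 - (if a = b then 1 else 0) := by
    intro b; by_cases h : a = b <;> simp [h]
  rw [Finset.sum_congr rfl fun b _ => this b, Finset.sum_sub_distrib]
  simp [Finset.card_univ]

lemma rowsum_inl (a : Fin p) :
    ∑ j, AM (KplusK p q hp hq) (Sum.inl a) j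
      = (p:ℝ) - 1 + (if a = ⟨0, hp⟩ then 1 else 0) := by
  rw [Fintype.sum_sum_type]
  have h1 : ∑ b : Fin p, AM (KplusK p q hp hq) (Sum.inl a) (Sum.inl b) = (p:ℝ) - 1 := by
    rw [← sum_ind_ne p a]
    refine Finset.sum_congr rfl fun b _ => ?_
    simp only [AM, Matrix.of_apply, adj_ll]
  have h2 : ∑ b : Fin q, AM (KplusK p q hp hq) (Sum.inl a) (Sum.inr b)
      = (if a = ⟨0, hp⟩ then (1:ℝ) else 0) := by
    have : ∀ b : Fin q, AM (KplusK p q hp hq) (Sum.inl a) (Sum.inr b)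
        = if a = ⟨0, hp⟩ then (if b = ⟨0, hq⟩ then (1:ℝ) else 0) else 0 := by
      intro b
      simp only [AM, Matrix.of_apply, adj_lr]
      by_cases h : a = ⟨0, hp⟩ <;> by_cases h' : b = (⟨0, hq⟩ : Fin q) <;> simp [h, h']
    rw [Finset.sum_congr rfl fun b _ => this b]
    by_cases h : a = ⟨0, hp⟩ <;> simp [h]
  rw [h1, h2]

lemma rowsum_inr (a : Fin q) :
    ∑ j, AM (KplusK p q hp hq) (Sum.inr a) j
      = (q:ℝ) - 1 + (if a = ⟨0, hq⟩ then 1 else 0) := by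
  rw [Fintype.sum_sum_type]
  have h1 : ∑ b : Fin q, AM (KplusK p q hp hq) (Sum.inr a) (Sum.inr b) = (q:ℝ) - 1 := by
    rw [← sum_ind_ne q a]
    refine Finset.sum_congr rfl fun b _ => ?_
    simp only [AM, Matrix.of_apply, adj_rr]
  have h2 : ∑ b : Fin p, AM (KplusK p q hp hq) (Sum.inr a) (Sum.inl b)
      = (if a = ⟨0, hq⟩ then (1:ℝ) else 0) := by
    have : ∀ b : Fin p, AM (KplusK p q hp hq) (Sum.inr a) (Sum.inl b)
        = if a = ⟨0, hq⟩ then (if b = ⟨0, hp⟩ then (1:ℝ) else 0) else 0 := by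
      intro b
      simp only [AM, Matrix.of_apply, adj_rl]
      by_cases h : a = ⟨0, hq⟩ <;> by_cases h' : b = (⟨0, hp⟩ : Fin p) <;> simp [h, h']
    rw [Finset.sum_congr rfl fun b _ => this b]
    by_cases h : a = ⟨0, hq⟩ <;> simp [h]
  rw [h1, h2, add_comm]

end GraphPart

section MainPart
open Matrix

lemma specRad_congr {a b c d : ℕ} (hac : a = c) (hbd : b = d)
    (ha : 0 < a) (hb : 0 < b) (hc : 0 < c) (hd : 0 < d) :
    specRad (KplusK a b ha hb) = specRad (KplusK c d hc hd) := by
  subst hac; subst hbd; rfl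

lemma specRad_swap (p q : ℕ) (hp : 0 < p) (hq : 0 < q) :
    specRad (KplusK p q hp hq) = specRad (KplusK q p hq hp) := by
  refine specRad_iso (Equiv.sumComm (Fin p) (Fin q)) _ _ fun i j => ?_
  cases i <;> cases j <;>
    simp only [Equiv.sumComm_apply, Sum.swap_inl, Sum.swap_inr,
      adj_ll, adj_rr, adj_lr, adj_rl] <;> tauto

lemma specRad_lower (p q : ℕ) (hp : 0 < p) (hq : 0 < q) :
    (q:ℝ) - 1 ≤ specRad (KplusK p q hp hq) := by
  haveI : Nonempty (Fin p ⊕ Fin q) := ⟨Sum.inl ⟨0, hp⟩⟩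
  obtain ⟨x, -, -, -, hray⟩ := specRad_package (KplusK p q hp hq)
  set v : Fin p ⊕ Fin q → ℝ := Sum.elim (fun _ => 0) (fun _ => 1) with hv
  have hAv : ∀ b : Fin q, (AM (KplusK p q hp hq) *ᵥ v) (Sum.inr b) = (q:ℝ) - 1 := by
    intro b
    simp only [Matrix.mulVec, dotProduct]
    rw [Fintype.sum_sum_type]
    have h1 : ∑ c : Fin p, AM (KplusK p q hp hq) (Sum.inr b) (Sum.inl c) * v (Sum.inl c)
        = 0 := by
      refine Finset.sum_eq_zero fun c _ => ?_
      simp [hv]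
    have h2 : ∑ c : Fin q, AM (KplusK p q hp hq) (Sum.inr b) (Sum.inr c) * v (Sum.inr c)
        = (q:ℝ) - 1 := by
      rw [← sum_ind_ne q b]
      refine Finset.sum_congr rfl fun c _ => ?_
      simp [hv, AM, adj_rr]
    rw [h1, h2, zero_add]
  have hvA : v ⬝ᵥ (AM (KplusK p q hp hq) *ᵥ v) = (q:ℝ) * ((q:ℝ) - 1) := by
    rw [dotProduct, Fintype.sum_sum_type]
    have h1 : ∑ c : Fin p, v (Sum.inl c) * (AM (KplusK p q hp hq) *ᵥ v) (Sum.inl c) = 0 := by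
      refine Finset.sum_eq_zero fun c _ => ?_
      simp [hv]
    have h2 : ∑ c : Fin q, v (Sum.inr c) * (AM (KplusK p q hp hq) *ᵥ v) (Sum.inr c)
        = (q:ℝ) * ((q:ℝ) - 1) := by
      have : ∀ c : Fin q, v (Sum.inr c) * (AM (KplusK p q hp hq) *ᵥ v) (Sum.inr c)
          = (q:ℝ) - 1 := by
        intro c; rw [hAv c]; simp [hv]
      rw [Finset.sum_congr rfl fun c _ => this c, Finset.sum_const, Finset.card_univ]
      simp [mul_comm]
    rw [h1, h2, zero_add]
  have hvv : v ⬝ᵥ v = (q:ℝ) := by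
    rw [dotProduct, Fintype.sum_sum_type]
    have h1 : ∑ c : Fin p, v (Sum.inl c) * v (Sum.inl c) = 0 := by
      refine Finset.sum_eq_zero fun c _ => ?_; simp [hv]
    have h2 : ∑ c : Fin q, v (Sum.inr c) * v (Sum.inr c) = (q:ℝ) := by
      have : ∀ c : Fin q, v (Sum.inr c) * v (Sum.inr c) = 1 := by intro c; simp [hv]
      rw [Finset.sum_congr rfl fun c _ => this c, Finset.sum_const, Finset.card_univ]
      simp
    rw [h1, h2, zero_add]
  have h := hray v
  rw [hvA, hvv] at h
  have hq' : (0:ℝ) < q := by exact_mod_cast hq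
  nlinarith

lemma specRad_upper (p q : ℕ) (hp0 : 0 < p) (hq0 : 0 < q)
    (hp3 : 3 ≤ p) (hq3 : 3 ≤ q) (hpq : p ≤ q) :
    specRad (KplusK p q hp0 hq0) < q := by
  haveI : Nonempty (Fin p ⊕ Fin q) := ⟨Sum.inl ⟨0, hp0⟩⟩
  obtain ⟨x, hxnn, hxne, heig, hray⟩ := specRad_package (KplusK p q hp0 hq0)
  set G := KplusK p q hp0 hq0 with hG
  set lam := specRad G with hlam
  obtain ⟨i0, hi0⟩ := Finite.exists_max x
  set m := x i0 with hm
  have hmpos : 0 < m := by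
    obtain ⟨k, hk⟩ := Function.ne_iff.1 hxne
    have h1 : x k ≠ 0 := by simpa using hk
    exact lt_of_lt_of_le (lt_of_le_of_ne (hxnn k) (Ne.symm h1)) (hi0 k)
  have heq : ∀ i, ∑ j, AM G i j * x j = lam * x i := by
    intro i
    have := congrFun heig i
    simpa [Matrix.mulVec, dotProduct] using this
  have hpq' : (p:ℝ) ≤ (q:ℝ) := by exact_mod_cast hpq
  have hdeg : ∀ i, ∑ j, AM G i j ≤ (q:ℝ) := by
    intro i
    cases i with
    | inl a => rw [hG, rowsum_inl]; split <;> linarith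
    | inr a => rw [hG, rowsum_inr]; split <;> simp
  have hgen : ∀ i, lam * x i ≤ (∑ j, AM G i j) * m := by
    intro i
    rw [← heq i, Finset.sum_mul]
    exact Finset.sum_le_sum fun j _ => mul_le_mul_of_nonneg_left (hi0 j) (AM_nonneg _ _ _)
  have hle : lam ≤ q := by
    have h1 := hgen i0
    have h2 : (∑ j, AM G i0 j) * m ≤ (q:ℝ) * m :=
      mul_le_mul_of_nonneg_right (hdeg i0) hmpos.le
    rw [← hm] at h1
    nlinarith
  rcases hle.lt_or_eq with h | h
  · exact h
  exfalso
  have claim : ∀ i, x i = m → (∑ j, AM G i j) = q ∧ ∀ j, AM G i j ≠ 0 → x j = m := by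
    intro i hxi
    have e1 : ∑ j, AM G i j * (m - x j) = (∑ j, AM G i j) * m - (q:ℝ) * m := by
      simp only [mul_sub]
      rw [Finset.sum_sub_distrib, ← Finset.sum_mul, heq i, hxi, ← h]
    have e3 : ∀ j ∈ Finset.univ, (0:ℝ) ≤ AM G i j * (m - x j) := fun j _ =>
      mul_nonneg (AM_nonneg _ _ _) (by linarith [hi0 j])
    have e2 : ∑ j, AM G i j * (m - x j) ≤ 0 := by
      rw [e1]
      nlinarith [hdeg i]
    have e4 : ∑ j, AM G i j * (m - x j) = 0 :=
      le_antisymm e2 (Finset.sum_nonneg e3)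
    constructor
    · have e5 : (∑ j, AM G i j) * m - (q:ℝ) * m = 0 := by rw [← e1, e4]
      have := mul_right_cancel₀ hmpos.ne' (by linarith : (∑ j, AM G i j) * m = (q:ℝ) * m)
      exact this
    · intro j hAj
      have := (Finset.sum_eq_zero_iff_of_nonneg e3).1 e4 j (Finset.mem_univ j)
      rcases mul_eq_zero.1 this with h' | h'
      · exact absurd h' hAj
      · linarith
  obtain ⟨hdeg0, hnb⟩ := claim i0 rfl
  have hq1 : ((q:ℝ) - 1) ≠ (q:ℝ) := by norm_num
  cases i0 with
  | inl a =>
    rw [hG, rowsum_inl] at hdeg0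
    by_cases ha : a = (⟨0, hp0⟩ : Fin p)
    · rw [if_pos ha] at hdeg0
      -- p = q
      set j1 : Fin p := ⟨1, by omega⟩ with hj1
      have hne1 : a ≠ j1 := by
        rw [ha]
        intro hcon
        have := congrArg Fin.val hcon
        simp [hj1] at this
      have hA1 : AM G (Sum.inl a) (Sum.inl j1) = 1 := by
        simp only [hG, AM, Matrix.of_apply, adj_ll]
        rw [if_pos hne1]
      have hx1 : x (Sum.inl j1) = m := hnb _ (by rw [hA1]; norm_num)
      obtain ⟨hdeg1, -⟩ := claim (Sum.inl j1) hx1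
      rw [hG, rowsum_inl] at hdeg1
      have hj10 : j1 ≠ (⟨0, hp0⟩ : Fin p) := by
        intro hcon
        have := congrArg Fin.val hcon
        simp [hj1] at this
      rw [if_neg hj10] at hdeg1
      rw [add_zero] at hdeg1
      linarith
    · rw [if_neg ha, add_zero] at hdeg0
      have hp3' : (3:ℝ) ≤ (p:ℝ) := by exact_mod_cast hp3
      linarith
  | inr b =>
    rw [hG, rowsum_inr] at hdeg0
    by_cases hb : b = (⟨0, hq0⟩ : Fin q)
    · rw [if_pos hb] at hdeg0
      set j1 : Fin q := ⟨1, by omega⟩ with hj1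
      have hne1 : b ≠ j1 := by
        rw [hb]
        intro hcon
        have := congrArg Fin.val hcon
        simp [hj1] at this
      have hA1 : AM G (Sum.inr b) (Sum.inr j1) = 1 := by
        simp only [hG, AM, Matrix.of_apply, adj_rr]
        rw [if_pos hne1]
      have hx1 : x (Sum.inr j1) = m := hnb _ (by rw [hA1]; norm_num)
      obtain ⟨hdeg1, -⟩ := claim (Sum.inr j1) hx1
      rw [hG, rowsum_inr] at hdeg1
      have hj10 : j1 ≠ (⟨0, hq0⟩ : Fin q) := by
        intro hcon
        have := congrArg Fin.val hcon
        simp [hj1] at this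
      rw [if_neg hj10, add_zero] at hdeg1
      linarith
    · rw [if_neg hb, add_zero] at hdeg0
      linarith

end MainPart

lemma specRad_strict (p q : ℕ) (hp0 : 0 < p) (hq0 : 0 < q)
    (hp5 : 5 ≤ p) (hq3 : 3 ≤ q) (hpq : p ≤ q) :
    specRad (KplusK p q hp0 hq0)
      < specRad (KplusK 3 (p + q - 3) (by norm_num) (by omega)) := by
  have h1 := specRad_upper p q hp0 hq0 (by omega) hq3 hpq
  have h2 := specRad_lower 3 (p + q - 3) (by norm_num) (by omega)
  have h3 : (q:ℝ) ≤ ((p + q - 3 : ℕ) : ℝ) - 1 := by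
    have h4 : q + 2 ≤ p + q - 3 := by omega
    have h5 : ((q + 2 : ℕ) : ℝ) ≤ ((p + q - 3 : ℕ) : ℝ) := by exact_mod_cast h4
    push_cast at h5
    linarith
  linarith

theorem spectral_KplusK_three (l p q : ℕ) (hl : Even l) (hpodd : Odd p)
    (hqodd : Odd q) (hp : 3 ≤ p) (hq : 3 ≤ q) (hpq : p + q = l) :
    specRad (KplusK p q (by omega) (by omega)) ≤
      specRad (KplusK 3 (l - 3) (by omega) (by omega)) ∧
    (specRad (KplusK p q (by omega) (by omega)) =
        specRad (KplusK 3 (l - 3) (by omega) (by omega)) ↔ p = 3 ∨ q = 3) := by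
  subst hpq
  obtain ⟨kp, hkp⟩ := hpodd
  obtain ⟨kq, hkq⟩ := hqodd
  have hstrict : p ≠ 3 → q ≠ 3 →
      specRad (KplusK p q (by omega) (by omega))
        < specRad (KplusK 3 (p + q - 3) (by omega) (by omega)) := by
    intro hp3 hq3
    have hp5 : 5 ≤ p := by omega
    have hq5 : 5 ≤ q := by omega
    rcases le_total p q with hle | hle
    · exact specRad_strict p q (by omega) (by omega) hp5 hq hle
    · calc specRad (KplusK p q (by omega) (by omega))
          = specRad (KplusK q p (by omega) (by omega)) := specRad_swap p q _ _
        _ < specRad (KplusK 3 (q + p - 3) (by omega) (by omega)) :=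
            specRad_strict q p (by omega) (by omega) hq5 hp hle
        _ = specRad (KplusK 3 (p + q - 3) (by omega) (by omega)) :=
            specRad_congr rfl (by omega) _ _ _ _
  have heqc : p = 3 ∨ q = 3 →
      specRad (KplusK p q (by omega) (by omega))
        = specRad (KplusK 3 (p + q - 3) (by omega) (by omega)) := by
    rintro (h3 | h3)
    · exact specRad_congr h3 (by omega) _ _ _ _
    · calc specRad (KplusK p q (by omega) (by omega))
          = specRad (KplusK q p (by omega) (by omega)) := specRad_swap p q _ _
        _ = specRad (KplusK 3 (p + q - 3) (by omega) (by omega)) :=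
            specRad_congr h3 (by omega) _ _ _ _
  constructor
  · by_cases hp3 : p = 3
    · exact le_of_eq (heqc (Or.inl hp3))
    · by_cases hq3 : q = 3
      · exact le_of_eq (heqc (Or.inr hq3))
      · exact le_of_lt (hstrict hp3 hq3)
  · constructor
    · intro heq
      by_contra hcon
      push_neg at hcon
      exact absurd heq (ne_of_lt (hstrict hcon.1 hcon.2))
    · exact heqc
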